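/- Let $u, w \in S_n$ and $1 \le k < n$. Then $u \le_k w$ in the $k$-Bruhat order if and only if: (1) for all $a \le k < b \le n$, $u(a) \le w(a)$ and $u(b) \ge w(b)$; and (2) whenever $a < b$, $u(a) < u(b)$, and $w(a) > w(b)$, we have $a \le k < b$. -/

import Mathlib

/-- Coxeter length of a permutation of `Fin n`: the number of inversions. -/
def len {n : ℕ} (u : Equiv.Perm (Fin n)) : ℕ :=
  (Finset.univ.filter fun p : Fin n × Fin n => p.1 < p.2 ∧ u p.2 < u p.1).card

/-- `w` covers `u` in the strong Bruhat order: `w = u·t` for a transposition `t`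
and `ℓ(w) = ℓ(u) + 1`. -/
def BruhatCover {n : ℕ} (u w : Equiv.Perm (Fin n)) : Prop :=
  (∃ i j : Fin n, i ≠ j ∧ w = u * Equiv.swap i j) ∧ len w = len u + 1

/-- The strong Bruhat order on `S_n`. -/
def BruhatLE {n : ℕ} (u w : Equiv.Perm (Fin n)) : Prop :=
  Relation.ReflTransGen BruhatCover u w

/-- The image `u({1,…,k})`, zero-indexed as `u({i : i.val < k})`. -/
def kImage {n : ℕ} (k : ℕ) (u : Equiv.Perm (Fin n)) : Finset (Fin n) :=
  (Finset.univ.filter fun i : Fin n => i.val < k).image u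

/-- `w` is a `k`-cover of `u`: a Bruhat cover with `w({1,…,k}) ≠ u({1,…,k})`. -/
def KBruhatCover {n : ℕ} (k : ℕ) (u w : Equiv.Perm (Fin n)) : Prop :=
  BruhatCover u w ∧ kImage k u ≠ kImage k w

/-- The `k`-Bruhat order on `S_n`: transitive closure of `k`-covers. -/
def KBruhatLE {n : ℕ} (k : ℕ) (u w : Equiv.Perm (Fin n)) : Prop :=
  Relation.ReflTransGen (KBruhatCover k) u w

/-- `z` lies in the Young subgroup `S_k × S_{n-k}`, i.e. `z` fixes the sets
`{1,…,k}` and `{k+1,…,n}` setwise. -/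
def IsYoung {n : ℕ} (k : ℕ) (z : Equiv.Perm (Fin n)) : Prop :=
  ∀ i : Fin n, (z i).val < k ↔ i.val < k

/-- `u` is anti-Grassmannian of type `(k,n)`: decreasing on `{1,…,k}` and on
`{k+1,…,n}` (zero-indexed: on `val < k` and on `k ≤ val`). -/
def AntiGrass {n : ℕ} (k : ℕ) (u : Equiv.Perm (Fin n)) : Prop :=
  (∀ a b : Fin n, a < b → b.val < k → u b < u a) ∧
  (∀ a b : Fin n, a < b → k ≤ a.val → u b < u a)

section Aux
open Finset

variable {n : ℕ}

/-- classification of pairs reversed by a swap -/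
lemma swap_lt_cases {a b : Fin n} (hab : a < b) {p : Fin n × Fin n}
    (h1 : p.1 < p.2) (h2 : Equiv.swap a b p.2 < Equiv.swap a b p.1) :
    p = (a, b) ∨ (p.1 = a ∧ a < p.2 ∧ p.2 < b) ∨ (p.2 = b ∧ a < p.1 ∧ p.1 < b) := by
  by_cases h1a : p.1 = a
  · by_cases h2b : p.2 = b
    · exact Or.inl (Prod.ext h1a h2b)
    · have h2a : p.2 ≠ a := by
        intro h; rw [h1a, h] at h1; exact lt_irrefl _ h1
      rw [h1a, Equiv.swap_apply_left, Equiv.swap_apply_of_ne_of_ne h2a h2b] at h2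
      rw [h1a] at h1
      exact Or.inr (Or.inl ⟨h1a, h1, h2⟩)
  · by_cases h1b : p.1 = b
    · exfalso
      have h2a : p.2 ≠ a := fun h => by
        rw [h, h1b] at h1; exact absurd (lt_trans hab h1) (lt_irrefl _)
      have h2b : p.2 ≠ b := ne_of_gt (h1b ▸ h1)
      rw [h1b, Equiv.swap_apply_right, Equiv.swap_apply_of_ne_of_ne h2a h2b] at h2
      exact absurd (lt_trans h1 h2) (by rw [h1b]; exact fun h => absurd (lt_trans hab h) (lt_irrefl _))
    · rw [Equiv.swap_apply_of_ne_of_ne h1a h1b] at h2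
      by_cases h2b : p.2 = b
      · subst h2b
        rw [Equiv.swap_apply_right] at h2
        exact Or.inr (Or.inr ⟨rfl, h2, h1⟩)
      · by_cases h2a : p.2 = a
        · exfalso; subst h2a
          rw [Equiv.swap_apply_left] at h2
          exact absurd (lt_trans h1 hab) (asymm h2)
        · rw [Equiv.swap_apply_of_ne_of_ne h2a h2b] at h2
          exact absurd (lt_trans h1 h2) (lt_irrefl _)

lemma len_mul_swap (u : Equiv.Perm (Fin n)) {a b : Fin n} (hab : a < b) (hu : u a < u b) :
    len (u * Equiv.swap a b) = len u + 1 +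
      2 * ((Finset.univ.filter fun c : Fin n => a < c ∧ c < b ∧ u a < u c ∧ u c < u b).card) := by
  set s := Equiv.swap a b with hs
  have hss : ∀ x : Fin n, s (s x) = x := fun x => Equiv.swap_apply_self a b x
  have hsa : s a = b := Equiv.swap_apply_left a b
  have hsb : s b = a := Equiv.swap_apply_right a b
  have hsinj : Function.Injective s := s.injective
  -- finsets
  set A := Finset.univ.filter (fun p : Fin n × Fin n => p.1 < p.2 ∧ s p.1 < s p.2 ∧ u p.2 < u p.1) with hA
  set A' := Finset.univ.filter (fun p : Fin n × Fin n => p.1 < p.2 ∧ s p.2 < s p.1 ∧ u p.2 < u p.1) with hA'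
  set B := Finset.univ.filter (fun p : Fin n × Fin n => p.1 < p.2 ∧ s p.2 < s p.1 ∧ u p.1 < u p.2) with hB
  set B1 := Finset.univ.filter (fun c : Fin n => a < c ∧ c < b ∧ u a < u c) with hB1
  set B2 := Finset.univ.filter (fun c : Fin n => a < c ∧ c < b ∧ u c < u b) with hB2
  set C1 := Finset.univ.filter (fun c : Fin n => a < c ∧ c < b ∧ u c < u a) with hC1
  set C2 := Finset.univ.filter (fun c : Fin n => a < c ∧ c < b ∧ u b < u c) with hC2
  set mid := Finset.univ.filter (fun c : Fin n => a < c ∧ c < b) with hmid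
  set M := Finset.univ.filter (fun c : Fin n => a < c ∧ c < b ∧ u a < u c ∧ u c < u b) with hM
  have sne : ∀ {p q : Fin n}, p ≠ q → s p ≠ s q := fun h => fun he => h (hsinj he)
  -- Step lv : len (u * s) = A.card + B.card
  have step_lv : len (u * s) = A.card + B.card := by
    have h0 : len (u * s) =
        (Finset.univ.filter fun p : Fin n × Fin n => p.1 < p.2 ∧ u (s p.2) < u (s p.1)).card := by
      simp only [len, Equiv.Perm.mul_apply]
      rfl
    rw [h0]
    have hbij : (Finset.univ.filter fun p : Fin n × Fin n => p.1 < p.2 ∧ u (s p.2) < u (s p.1)).card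
        = (Finset.univ.filter fun p : Fin n × Fin n => p.1 < p.2 ∧
            ((s p.1 < s p.2 ∧ u p.2 < u p.1) ∨ (s p.2 < s p.1 ∧ u p.1 < u p.2))).card := by
      apply Finset.card_nbij'
        (i := fun p => if s p.1 < s p.2 then (s p.1, s p.2) else (s p.2, s p.1))
        (j := fun p => if s p.1 < s p.2 then (s p.1, s p.2) else (s p.2, s p.1))
      · intro p hp
        simp only [Finset.mem_coe] at hp ⊢
        rw [Finset.mem_filter] at hp ⊢
        obtain ⟨-, hlt, hinv⟩ := hp
        refine ⟨Finset.mem_univ _, ?_⟩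
        rcases lt_or_gt_of_ne (sne (ne_of_lt hlt)) with h | h
        · rw [if_pos h]
          exact ⟨h, Or.inl ⟨by rw [hss, hss]; exact hlt, hinv⟩⟩
        · rw [if_neg (not_lt_of_gt h)]
          exact ⟨h, Or.inr ⟨by rw [hss, hss]; exact hlt, hinv⟩⟩
      · intro p hp
        simp only [Finset.mem_coe] at hp ⊢
        rw [Finset.mem_filter] at hp ⊢
        obtain ⟨-, hlt, hd⟩ := hp
        refine ⟨Finset.mem_univ _, ?_⟩
        rcases hd with ⟨h, hinv⟩ | ⟨h, hinv⟩
        · rw [if_pos h]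
          exact ⟨h, by rw [hss, hss]; exact hinv⟩
        · rw [if_neg (not_lt_of_gt h)]
          exact ⟨h, by rw [hss, hss]; exact hinv⟩
      · intro p hp
        simp only [Finset.mem_coe] at hp
        beta_reduce
        rw [Finset.mem_filter] at hp
        obtain ⟨-, hlt, -⟩ := hp
        rcases lt_or_gt_of_ne (sne (ne_of_lt hlt)) with h | h
        · rw [if_pos h]; simp only [hss]; rw [if_pos hlt]
        · rw [if_neg (not_lt_of_gt h)]; simp only [hss]
          rw [if_neg (not_lt_of_gt hlt)]
      · intro p hp
        simp only [Finset.mem_coe] at hp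
        beta_reduce
        rw [Finset.mem_filter] at hp
        obtain ⟨-, hlt, -⟩ := hp
        rcases lt_or_gt_of_ne (sne (ne_of_lt hlt)) with h | h
        · rw [if_pos h]; simp only [hss]; rw [if_pos hlt]
        · rw [if_neg (not_lt_of_gt h)]; simp only [hss]
          rw [if_neg (not_lt_of_gt hlt)]
    rw [hbij]
    have hsplit : (Finset.univ.filter fun p : Fin n × Fin n => p.1 < p.2 ∧
            ((s p.1 < s p.2 ∧ u p.2 < u p.1) ∨ (s p.2 < s p.1 ∧ u p.1 < u p.2))) = A ∪ B := by
      ext p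
      simp only [hA, hB, Finset.mem_filter, Finset.mem_univ, true_and, Finset.mem_union]
      tauto
    rw [hsplit]
    apply Finset.card_union_of_disjoint
    rw [Finset.disjoint_left]
    intro p hp hq
    rw [Finset.mem_filter] at hp hq
    exact absurd hq.2.2.1 (not_lt_of_gt hp.2.2.1)
  -- Step lu : len u = A.card + A'.card
  have step_lu : len u = A.card + A'.card := by
    have hsplit : (Finset.univ.filter fun p : Fin n × Fin n => p.1 < p.2 ∧ u p.2 < u p.1) = A ∪ A' := by
      ext p
      simp only [hA, hA', Finset.mem_filter, Finset.mem_univ, true_and, Finset.mem_union]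
      constructor
      · rintro ⟨hlt, hinv⟩
        rcases lt_or_gt_of_ne (sne (ne_of_lt hlt)) with h | h
        · exact Or.inl ⟨hlt, h, hinv⟩
        · exact Or.inr ⟨hlt, h, hinv⟩
      · rintro (⟨hlt, -, hinv⟩ | ⟨hlt, -, hinv⟩) <;> exact ⟨hlt, hinv⟩
    rw [len, hsplit]
    apply Finset.card_union_of_disjoint
    rw [Finset.disjoint_left]
    intro p hp hq
    rw [Finset.mem_filter] at hp hq
    exact absurd hq.2.2.1 (not_lt_of_gt hp.2.2.1)
  -- structural description of B and A'
  have inj1 : Function.Injective (fun c : Fin n => ((a, c) : Fin n × Fin n)) := by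
    intro x y h; exact (Prod.ext_iff.mp h).2
  have inj2 : Function.Injective (fun c : Fin n => ((c, b) : Fin n × Fin n)) := by
    intro x y h; exact (Prod.ext_iff.mp h).1
  have step_b : B.card = 1 + B1.card + B2.card := by
    have hBeq : B = insert (a, b) ((B1.image fun c => (a, c)) ∪ (B2.image fun c => (c, b))) := by
      ext p
      simp only [hB, hB1, hB2, Finset.mem_filter, Finset.mem_univ, true_and,
        Finset.mem_insert, Finset.mem_union, Finset.mem_image]
      constructor
      · rintro ⟨hlt, hrev, hinv⟩
        rcases swap_lt_cases hab hlt hrev with hp | ⟨h1, h2, h3⟩ | ⟨h1, h2, h3⟩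
        · exact Or.inl hp
        · refine Or.inr (Or.inl ⟨p.2, ⟨h2, h3, ?_⟩, ?_⟩)
          · rw [← h1]; exact hinv
          · exact Prod.ext_iff.mpr ⟨h1.symm, rfl⟩
        · refine Or.inr (Or.inr ⟨p.1, ⟨h2, h3, ?_⟩, ?_⟩)
          · rw [← h1]; exact hinv
          · exact Prod.ext_iff.mpr ⟨rfl, h1.symm⟩
      · rintro (hp | ⟨c, ⟨h1, h2, h3⟩, hc⟩ | ⟨c, ⟨h1, h2, h3⟩, hc⟩)
        · subst hp
          exact ⟨hab, by rw [hsa, hsb]; exact hab, hu⟩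
        · subst hc
          refine ⟨h1, ?_, h3⟩
          rw [hsa, Equiv.swap_apply_of_ne_of_ne (ne_of_gt h1) (ne_of_lt h2)]
          exact h2
        · subst hc
          refine ⟨h2, ?_, h3⟩
          rw [hsb, Equiv.swap_apply_of_ne_of_ne (ne_of_gt h1) (ne_of_lt h2)]
          exact h1
    rw [hBeq]
    have hnotmem : (a, b) ∉ (B1.image fun c => (a, c)) ∪ (B2.image fun c => (c, b)) := by
      simp only [Finset.mem_union, Finset.mem_image, hB1, hB2, Finset.mem_filter,
        Finset.mem_univ, true_and, Prod.mk.injEq]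
      rintro (⟨c, ⟨h1, h2, h3⟩, -, rfl⟩ | ⟨c, ⟨h1, h2, h3⟩, rfl, -⟩)
      · exact absurd h2 (lt_irrefl _)
      · exact absurd h1 (lt_irrefl _)
    rw [Finset.card_insert_of_notMem hnotmem, Finset.card_union_of_disjoint, 
      Finset.card_image_of_injective _ inj1, Finset.card_image_of_injective _ inj2]
    · ring
    · rw [Finset.disjoint_left]
      rintro p hp hq
      simp only [Finset.mem_image, hB1, hB2, Finset.mem_filter, Finset.mem_univ, true_and] at hp hq
      obtain ⟨c, ⟨h1, h2, -⟩, rfl⟩ := hp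
      obtain ⟨c', ⟨h1', h2', -⟩, he⟩ := hq
      rw [Prod.ext_iff] at he
      obtain ⟨he1, he2⟩ := he
      simp only at he1 he2
      rw [← he1] at h1'
      exact absurd h1' (lt_irrefl _)
  have step_a' : A'.card = C1.card + C2.card := by
    have hAeq : A' = (C1.image fun c => (a, c)) ∪ (C2.image fun c => (c, b)) := by
      ext p
      simp only [hA', hC1, hC2, Finset.mem_filter, Finset.mem_univ, true_and,
        Finset.mem_union, Finset.mem_image]
      constructor
      · rintro ⟨hlt, hrev, hinv⟩
        rcases swap_lt_cases hab hlt hrev with hp | ⟨h1, h2, h3⟩ | ⟨h1, h2, h3⟩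
        · exfalso
          rw [hp] at hinv
          exact absurd hu (not_lt_of_gt hinv)
        · refine Or.inl ⟨p.2, ⟨h2, h3, ?_⟩, ?_⟩
          · rw [← h1]; exact hinv
          · exact Prod.ext_iff.mpr ⟨h1.symm, rfl⟩
        · refine Or.inr ⟨p.1, ⟨h2, h3, ?_⟩, ?_⟩
          · rw [← h1]; exact hinv
          · exact Prod.ext_iff.mpr ⟨rfl, h1.symm⟩
      · rintro (⟨c, ⟨h1, h2, h3⟩, hc⟩ | ⟨c, ⟨h1, h2, h3⟩, hc⟩)
        · subst hc
          refine ⟨h1, ?_, h3⟩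
          rw [hsa, Equiv.swap_apply_of_ne_of_ne (ne_of_gt h1) (ne_of_lt h2)]
          exact h2
        · subst hc
          refine ⟨h2, ?_, h3⟩
          rw [hsb, Equiv.swap_apply_of_ne_of_ne (ne_of_gt h1) (ne_of_lt h2)]
          exact h1
    rw [hAeq, Finset.card_union_of_disjoint, Finset.card_image_of_injective _ inj1,
      Finset.card_image_of_injective _ inj2]
    rw [Finset.disjoint_left]
    rintro p hp hq
    simp only [Finset.mem_image, hC1, hC2, Finset.mem_filter, Finset.mem_univ, true_and] at hp hq
    obtain ⟨c, ⟨h1, h2, -⟩, rfl⟩ := hp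
    obtain ⟨c', ⟨h1', h2', -⟩, he⟩ := hq
    rw [Prod.ext_iff] at he
    obtain ⟨he1, he2⟩ := he
    simp only at he1 he2
    rw [← he1] at h1'
    exact absurd h1' (lt_irrefl _)
  -- trichotomy counts
  have huinj : ∀ {x y : Fin n}, x ≠ y → u x ≠ u y := fun h => fun he => h (u.injective he)
  have step_t1 : B1.card + C1.card = mid.card := by
    have : B1 ∪ C1 = mid := by
      ext c
      simp only [hB1, hC1, hmid, Finset.mem_filter, Finset.mem_univ, true_and, Finset.mem_union]
      constructor
      · rintro (⟨h1, h2, -⟩ | ⟨h1, h2, -⟩) <;> exact ⟨h1, h2⟩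
      · rintro ⟨h1, h2⟩
        rcases lt_or_gt_of_ne (huinj (ne_of_gt h1)) with h | h
        · exact Or.inr ⟨h1, h2, h⟩
        · exact Or.inl ⟨h1, h2, h⟩
    rw [← this]
    rw [Finset.card_union_of_disjoint]
    rw [Finset.disjoint_left]
    intro c hc hc'
    rw [Finset.mem_filter] at hc hc'
    exact absurd hc'.2.2.2 (not_lt_of_gt hc.2.2.2)
  have step_t2 : B2.card + C2.card = mid.card := by
    have : B2 ∪ C2 = mid := by
      ext c
      simp only [hB2, hC2, hmid, Finset.mem_filter, Finset.mem_univ, true_and, Finset.mem_union]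
      constructor
      · rintro (⟨h1, h2, -⟩ | ⟨h1, h2, -⟩) <;> exact ⟨h1, h2⟩
      · rintro ⟨h1, h2⟩
        rcases lt_or_gt_of_ne (huinj (ne_of_lt h2)) with h | h
        · exact Or.inl ⟨h1, h2, h⟩
        · exact Or.inr ⟨h1, h2, h⟩
    rw [← this]
    rw [Finset.card_union_of_disjoint]
    rw [Finset.disjoint_left]
    intro c hc hc'
    rw [Finset.mem_filter] at hc hc'
    exact absurd hc'.2.2.2 (not_lt_of_gt hc.2.2.2)
  have step_t3 : B1.card + B2.card = mid.card + M.card := by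
    have h1 : B1 ∪ B2 = mid := by
      ext c
      simp only [hB1, hB2, hmid, Finset.mem_filter, Finset.mem_univ, true_and, Finset.mem_union]
      constructor
      · rintro (⟨h1, h2, -⟩ | ⟨h1, h2, -⟩) <;> exact ⟨h1, h2⟩
      · rintro ⟨h1, h2⟩
        rcases lt_or_gt_of_ne (huinj (ne_of_gt h1)) with h | h
        · exact Or.inr ⟨h1, h2, lt_trans h hu⟩
        · exact Or.inl ⟨h1, h2, h⟩
    have h2 : B1 ∩ B2 = M := by
      ext c
      simp only [hB1, hB2, hM, Finset.mem_filter, Finset.mem_univ, true_and, Finset.mem_inter]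
      tauto
    rw [← h1, ← h2]
    exact (Finset.card_union_add_card_inter B1 B2).symm
  rw [step_lv, step_lu]
  omega

lemma cover_iff (u v : Equiv.Perm (Fin n)) : BruhatCover u v ↔
    ∃ a b : Fin n, a < b ∧ u a < u b ∧ v = u * Equiv.swap a b ∧
      ∀ c : Fin n, a < c → c < b → ¬(u a < u c ∧ u c < u b) := by
  constructor
  · rintro ⟨⟨i, j, hij, hv⟩, hlen⟩
    -- normalize to a < b
    obtain ⟨a, b, hab, hv⟩ : ∃ a b : Fin n, a < b ∧ v = u * Equiv.swap a b := by
      rcases lt_or_gt_of_ne hij with h | h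
      · exact ⟨i, j, h, hv⟩
      · exact ⟨j, i, h, by rw [hv, Equiv.swap_comm]⟩
    have hne : u a ≠ u b := fun h => (ne_of_lt hab) (u.injective h)
    rcases lt_or_gt_of_ne hne with h | h
    · refine ⟨a, b, hab, h, hv, ?_⟩
      have hf := len_mul_swap u hab h
      rw [← hv, hlen] at hf
      have hcard : (Finset.univ.filter fun c : Fin n =>
          a < c ∧ c < b ∧ u a < u c ∧ u c < u b).card = 0 := by omega
      intro c h1 h2 h3
      have : c ∈ (Finset.univ.filter fun c : Fin n =>
          a < c ∧ c < b ∧ u a < u c ∧ u c < u b) :=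
        Finset.mem_filter.mpr ⟨Finset.mem_univ _, h1, h2, h3.1, h3.2⟩
      rw [Finset.card_eq_zero.mp hcard] at this
      exact absurd this (Finset.notMem_empty _)
    · exfalso
      have hva : v a = u b := by rw [hv]; simp [Equiv.Perm.mul_apply, Equiv.swap_apply_left]
      have hvb : v b = u a := by rw [hv]; simp [Equiv.Perm.mul_apply, Equiv.swap_apply_right]
      have hv2 : v a < v b := by rw [hva, hvb]; exact h
      have hf := len_mul_swap v hab hv2
      have : v * Equiv.swap a b = u := by
        rw [hv, mul_assoc, Equiv.swap_mul_self, mul_one]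
      rw [this] at hf
      omega
  · rintro ⟨a, b, hab, hu, hv, hno⟩
    refine ⟨⟨a, b, ne_of_lt hab, hv⟩, ?_⟩
    have hf := len_mul_swap u hab hu
    rw [← hv] at hf
    have hcard : (Finset.univ.filter fun c : Fin n =>
        a < c ∧ c < b ∧ u a < u c ∧ u c < u b) = ∅ := by
      rw [Finset.eq_empty_iff_forall_notMem]
      intro c hc
      rw [Finset.mem_filter] at hc
      exact hno c hc.2.1 hc.2.2.1 ⟨hc.2.2.2.1, hc.2.2.2.2⟩
    rw [hcard] at hf
    simpa using hf

lemma kImage_mul_swap_eq {k : ℕ} (u : Equiv.Perm (Fin n)) {a b : Fin n}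
    (h : a.val < k ↔ b.val < k) : kImage k (u * Equiv.swap a b) = kImage k u := by
  have hmem : ∀ i : Fin n, i.val < k → ((Equiv.swap a b) i).val < k := by
    intro i hi
    rcases eq_or_ne i a with rfl | hia
    · rw [Equiv.swap_apply_left]; exact h.mp hi
    · rcases eq_or_ne i b with rfl | hib
      · rw [Equiv.swap_apply_right]; exact h.mpr hi
      · rw [Equiv.swap_apply_of_ne_of_ne hia hib]; exact hi
  unfold kImage
  ext x
  simp only [Finset.mem_image, Finset.mem_filter, Finset.mem_univ, true_and,
    Equiv.Perm.mul_apply]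
  constructor
  · rintro ⟨i, hi, rfl⟩
    exact ⟨Equiv.swap a b i, hmem i hi, rfl⟩
  · rintro ⟨i, hi, rfl⟩
    refine ⟨Equiv.swap a b i, hmem i hi, ?_⟩
    rw [Equiv.swap_apply_self]

lemma kImage_mul_swap_ne {k : ℕ} (u : Equiv.Perm (Fin n)) {a b : Fin n}
    (hab : a ≠ b) (ha : a.val < k) (hb : k ≤ b.val) :
    kImage k u ≠ kImage k (u * Equiv.swap a b) := by
  intro h
  have h1 : u a ∈ kImage k u :=
    Finset.mem_image.mpr ⟨a, Finset.mem_filter.mpr ⟨Finset.mem_univ _, ha⟩, rfl⟩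
  rw [h] at h1
  obtain ⟨x, hx, hux⟩ := Finset.mem_image.mp h1
  rw [Finset.mem_filter] at hx
  have h2 : Equiv.swap a b x = a := u.injective hux
  have h3 : x = b := by
    have := congrArg (Equiv.swap a b) h2
    rw [Equiv.swap_apply_self, Equiv.swap_apply_left] at this
    exact this
  rw [h3] at hx
  exact absurd hx.2 (not_lt_of_ge hb)

def Cond (k : ℕ) {n : ℕ} (u w : Equiv.Perm (Fin n)) : Prop :=
  (∀ a : Fin n, a.val < k → u a ≤ w a) ∧
  (∀ b : Fin n, k ≤ b.val → w b ≤ u b) ∧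
  (∀ a b : Fin n, a < b → u a < u b → w b < w a → a.val < k ∧ k ≤ b.val)

lemma cond_refl (k : ℕ) (u : Equiv.Perm (Fin n)) : Cond k u u :=
  ⟨fun _ _ => le_refl _, fun _ _ => le_refl _,
   fun _ _ _ h1 h2 => absurd h1 (not_lt_of_gt h2)⟩

lemma cond_trans {k : ℕ} {u v w : Equiv.Perm (Fin n)}
    (h1 : Cond k u v) (h2 : Cond k v w) : Cond k u w := by
  obtain ⟨h11, h12, h13⟩ := h1
  obtain ⟨h21, h22, h23⟩ := h2
  refine ⟨fun a ha => le_trans (h11 a ha) (h21 a ha),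
          fun b hb => le_trans (h22 b hb) (h12 b hb), ?_⟩
  intro a b hab hu hw
  have hne : v a ≠ v b := fun h => (ne_of_lt hab) (v.injective h)
  rcases lt_or_gt_of_ne hne with h | h
  · exact h23 a b hab h hw
  · exact h13 a b hab hu h

lemma cond_of_kcover {k : ℕ} {u v : Equiv.Perm (Fin n)} (h : KBruhatCover k u v) :
    Cond k u v := by
  obtain ⟨hc, hne⟩ := h
  rw [cover_iff] at hc
  obtain ⟨a, b, hab, hu, rfl, hno⟩ := hc
  have hkab : a.val < k ∧ k ≤ b.val := by
    by_contra hcon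
    apply hne
    refine (kImage_mul_swap_eq u ?_).symm
    constructor
    · intro ha
      by_contra hbk
      exact hcon ⟨ha, le_of_not_gt hbk⟩
    · intro hb
      exact lt_trans hab hb
  obtain ⟨hak, hbk⟩ := hkab
  have hva : (u * Equiv.swap a b) a = u b := by
    simp [Equiv.Perm.mul_apply, Equiv.swap_apply_left]
  have hvb : (u * Equiv.swap a b) b = u a := by
    simp [Equiv.Perm.mul_apply, Equiv.swap_apply_right]
  have hvx : ∀ x : Fin n, x ≠ a → x ≠ b → (u * Equiv.swap a b) x = u x := by
    intro x h1 h2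
    simp [Equiv.Perm.mul_apply, Equiv.swap_apply_of_ne_of_ne h1 h2]
  refine ⟨?_, ?_, ?_⟩
  · intro x hx
    rcases eq_or_ne x a with rfl | hxa
    · rw [hva]; exact le_of_lt hu
    · have hxb : x ≠ b := fun h => by
        rw [h] at hx; exact absurd hx (not_lt_of_ge hbk)
      rw [hvx x hxa hxb]
  · intro y hy
    rcases eq_or_ne y b with rfl | hyb
    · rw [hvb]; exact le_of_lt hu
    · have hya : y ≠ a := fun h => by
        rw [h] at hy; exact absurd hak (not_lt_of_ge hy)
      rw [hvx y hya hyb]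
  · intro x y hxy h1 h2
    rcases eq_or_ne x a with rfl | hxa
    · rcases eq_or_ne y b with rfl | hyb
      · exact ⟨hak, hbk⟩
      · have hya : y ≠ x := ne_of_gt hxy
        rw [hva, hvx y hya hyb] at h2
        -- h2 : u y < u b; h1 : u a < u y
        rcases lt_or_gt_of_ne hyb with h | h
        · exact absurd ⟨h1, h2⟩ (hno y hxy h)
        · exact ⟨hak, le_trans hbk (le_of_lt h)⟩
    · rcases eq_or_ne x b with rfl | hxb
      · exfalso
        have hya : y ≠ a := ne_of_gt (lt_trans hab hxy)
        have hyb : y ≠ x := ne_of_gt hxy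
        rw [hvb, hvx y hya hyb] at h2
        -- h2 : u y < u a, h1 : u b < u y
        exact absurd (lt_trans h2 (lt_trans hu h1)) (lt_irrefl _)
      · rcases eq_or_ne y a with rfl | hya
        · exfalso
          have hxb' : x ≠ b := hxb
          rw [hva, hvx x hxa hxb'] at h2
          -- h2 : u b < u x, h1 : u x < u a
          exact absurd (lt_trans h2 (lt_trans h1 hu)) (lt_irrefl _)
        · rcases eq_or_ne y b with rfl | hyb
          · rw [hvb, hvx x hxa hxb] at h2
            -- h2 : u a < u x, h1 : u x < u b
            rcases lt_or_gt_of_ne hxa with h | h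
            · exact ⟨lt_trans h hak, hbk⟩
            · exact absurd ⟨h2, h1⟩ (hno x h hxy)
          · rw [hvx x hxa hxb, hvx y hya hyb] at h2
            exact absurd h1 (not_lt_of_gt h2)

lemma eq_of_measure_zero {k : ℕ} {u w : Equiv.Perm (Fin n)} (hc : Cond k u w)
    (h0 : ∑ x ∈ Finset.univ.filter (fun x : Fin n => x.val < k),
      ((w x).val - (u x).val) = 0) : u = w := by
  have h1 : ∀ x : Fin n, x.val < k → u x = w x := by
    intro x hx
    have hz := Finset.sum_eq_zero_iff.mp h0 x
      (Finset.mem_filter.mpr ⟨Finset.mem_univ _, hx⟩)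
    have hle : (u x).val ≤ (w x).val := hc.1 x hx
    exact Fin.ext (by omega)
  have hsum : ∀ z : Equiv.Perm (Fin n), ∑ x : Fin n, (z x).val = ∑ x : Fin n, x.val :=
    fun z => Equiv.sum_comp z (fun x => x.val)
  have hsplit : ∀ z : Equiv.Perm (Fin n),
      ∑ x ∈ Finset.univ.filter (fun x : Fin n => x.val < k), (z x).val +
      ∑ x ∈ Finset.univ.filter (fun x : Fin n => ¬ x.val < k), (z x).val =
      ∑ x : Fin n, x.val := by
    intro z
    rw [Finset.sum_filter_add_sum_filter_not Finset.univ (fun x : Fin n => x.val < k)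
      (fun x => (z x).val)]
    exact hsum z
  have hfeq : ∑ x ∈ Finset.univ.filter (fun x : Fin n => x.val < k), (u x).val =
      ∑ x ∈ Finset.univ.filter (fun x : Fin n => x.val < k), (w x).val := by
    apply Finset.sum_congr rfl
    intro x hx
    rw [h1 x (Finset.mem_filter.mp hx).2]
  have h2sum : ∑ x ∈ Finset.univ.filter (fun x : Fin n => ¬ x.val < k), (w x).val =
      ∑ x ∈ Finset.univ.filter (fun x : Fin n => ¬ x.val < k), (u x).val := by
    have hu := hsplit u
    have hw := hsplit w
    omega
  have h2 := (Finset.sum_eq_sum_iff_of_le (f := fun x => (w x).val) (g := fun x => (u x).val) (fun x hx =>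
      hc.2.1 x (le_of_not_gt (Finset.mem_filter.mp hx).2))).mp h2sum
  apply Equiv.ext
  intro x
  by_cases hx : x.val < k
  · exact h1 x hx
  · exact (Fin.ext (h2 x (Finset.mem_filter.mpr ⟨Finset.mem_univ _, hx⟩))).symm

lemma le_of_cond {k : ℕ} : ∀ m : ℕ, ∀ u w : Equiv.Perm (Fin n), Cond k u w →
    (∑ x ∈ Finset.univ.filter (fun x : Fin n => x.val < k),
      ((w x).val - (u x).val)) = m → KBruhatLE k u w := by
  intro m
  induction m using Nat.strong_induction_on with
  | _ m ih =>
    intro u w hc hm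
    rcases Nat.eq_zero_or_pos m with rfl | hpos
    · rw [eq_of_measure_zero hc hm]
      exact Relation.ReflTransGen.refl
    · -- choose a : position < k with u a < w a, u a maximal
      have hSne : (Finset.univ.filter (fun x : Fin n => x.val < k ∧ u x < w x)).Nonempty := by
        by_contra hemp
        rw [Finset.not_nonempty_iff_eq_empty, Finset.eq_empty_iff_forall_notMem] at hemp
        have hz : ∑ x ∈ Finset.univ.filter (fun x : Fin n => x.val < k),
            ((w x).val - (u x).val) = 0 := by
          apply Finset.sum_eq_zero
          intro x hx
          obtain ⟨-, hxk⟩ := Finset.mem_filter.mp hx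
          have hle : (u x).val ≤ (w x).val := hc.1 x hxk
          have hnlt : ¬ u x < w x := fun hlt =>
            hemp x (Finset.mem_filter.mpr ⟨Finset.mem_univ _, hxk, hlt⟩)
          have : (w x).val ≤ (u x).val := le_of_not_gt hnlt
          omega
        omega
      obtain ⟨a, haS, hamax⟩ := Finset.exists_max_image _ (fun x => u x) hSne
      obtain ⟨-, hak, haw⟩ := Finset.mem_filter.mp haS
      -- choose b : position ≥ k with u a < u b ≤ w a and w b < u b, u b minimal
      have hYne : (Finset.univ.filter (fun y : Fin n =>
          k ≤ y.val ∧ u a < u y ∧ u y ≤ w a ∧ w y < u y)).Nonempty := by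
        refine ⟨u.symm (w a), Finset.mem_filter.mpr ⟨Finset.mem_univ _, ?_, ?_, ?_, ?_⟩⟩
        all_goals have hc' : u (u.symm (w a)) = w a := u.apply_symm_apply (w a)
        · by_contra hck
          push_neg at hck
          have hle : u (u.symm (w a)) ≤ w (u.symm (w a)) := hc.1 _ hck
          rcases eq_or_lt_of_le hle with heq | hlt
          · have h' : u.symm (w a) = a := w.injective (by rw [← heq, hc'])
            rw [h'] at heq
            exact absurd haw (not_lt_of_ge (le_of_eq heq.symm))
          · have := hamax _ (Finset.mem_filter.mpr ⟨Finset.mem_univ _, hck, hlt⟩)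
            rw [hc'] at this
            exact absurd haw (not_lt_of_ge this)
        · rw [hc']; exact haw
        · rw [hc']
        · rw [hc']
          have hck : k ≤ (u.symm (w a)).val := by
            by_contra hck
            push_neg at hck
            have hle : u (u.symm (w a)) ≤ w (u.symm (w a)) := hc.1 _ hck
            rcases eq_or_lt_of_le hle with heq | hlt
            · have : u.symm (w a) = a := w.injective (by rw [← heq, hc'])
              rw [this] at hc'
              exact absurd haw (by rw [hc']; exact lt_irrefl _)
            · have := hamax _ (Finset.mem_filter.mpr ⟨Finset.mem_univ _, hck, hlt⟩)
              rw [hc'] at this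
              exact absurd haw (not_lt_of_ge this)
          have hle : w (u.symm (w a)) ≤ u (u.symm (w a)) := hc.2.1 _ hck
          rcases eq_or_lt_of_le hle with heq | hlt
          · exfalso
            have : u.symm (w a) = a := w.injective (by rw [heq, hc'])
            rw [this] at hck
            exact absurd hak (not_lt_of_ge hck)
          · rw [hc'] at hlt; exact hlt
      obtain ⟨b, hbY, hbmin⟩ := Finset.exists_min_image _ (fun y => u y) hYne
      obtain ⟨-, hbk, huab, hubwa, hwbub⟩ := Finset.mem_filter.mp hbY
      have hab : a < b := by
        rw [Fin.lt_def]; omega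
      -- Claim 1 : w b ≤ u a
      have hwbua : w b ≤ u a := by
        by_contra hcon
        push_neg at hcon
        set c := u.symm (w b) with hcdef
        have hc' : u c = w b := u.apply_symm_apply (w b)
        have hcb : c ≠ b := by
          intro h
          rw [h] at hc'
          exact absurd hwbub (by rw [hc']; exact lt_irrefl _)
        have hucub : u c < u b := by rw [hc']; exact hwbub
        have huac : u a < u c := by rw [hc']; exact hcon
        by_cases hck : c.val < k
        · have hle : u c ≤ w c := hc.1 c hck
          rcases eq_or_lt_of_le hle with heq | hlt
          · exact hcb (w.injective (by rw [← heq, hc']))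
          · have := hamax c (Finset.mem_filter.mpr ⟨Finset.mem_univ _, hck, hlt⟩)
            exact absurd huac (not_lt_of_ge this)
        · have hck' : k ≤ c.val := le_of_not_gt hck
          have hle : w c ≤ u c := hc.2.1 c hck'
          rcases eq_or_lt_of_le hle with heq | hlt
          · exact hcb (w.injective (by rw [heq, hc']))
          · have := hbmin c (Finset.mem_filter.mpr ⟨Finset.mem_univ _, hck',
              huac, le_trans (le_of_lt hucub) hubwa, hlt⟩)
            exact absurd hucub (not_lt_of_ge this)
      -- Claim 2 : no middle
      have hno : ∀ c : Fin n, a < c → c < b → ¬(u a < u c ∧ u c < u b) := by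
        rintro c h1 h2 ⟨h3, h4⟩
        by_cases hck : c.val < k
        · have hle : u c ≤ w c := hc.1 c hck
          rcases eq_or_lt_of_le hle with heq | hlt
          · have hwc : w c < w a := by
              rw [← heq]
              exact lt_of_lt_of_le h4 hubwa
            exact absurd (hc.2.2 a c h1 h3 hwc).2 (not_le_of_gt hck)
          · have := hamax c (Finset.mem_filter.mpr ⟨Finset.mem_univ _, hck, hlt⟩)
            exact absurd h3 (not_lt_of_ge this)
        · have hck' : k ≤ c.val := le_of_not_gt hck
          have hle : w c ≤ u c := hc.2.1 c hck'
          rcases eq_or_lt_of_le hle with heq | hlt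
          · have hwc : w b < w c := by
              rw [heq]
              exact lt_of_le_of_lt hwbua h3
            exact absurd (hc.2.2 c b h2 h4 hwc).1 hck
          · have := hbmin c (Finset.mem_filter.mpr ⟨Finset.mem_univ _, hck',
              h3, le_trans (le_of_lt h4) hubwa, hlt⟩)
            exact absurd h4 (not_lt_of_ge this)
      -- the k-cover
      set v := u * Equiv.swap a b with hvdef
      have hva : v a = u b := by
        simp [hvdef, Equiv.Perm.mul_apply, Equiv.swap_apply_left]
      have hvb : v b = u a := by
        simp [hvdef, Equiv.Perm.mul_apply, Equiv.swap_apply_right]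
      have hvx : ∀ x : Fin n, x ≠ a → x ≠ b → v x = u x := by
        intro x h1 h2
        simp [hvdef, Equiv.Perm.mul_apply, Equiv.swap_apply_of_ne_of_ne h1 h2]
      have hKcov : KBruhatCover k u v :=
        ⟨(cover_iff u v).mpr ⟨a, b, hab, huab, rfl, hno⟩,
         kImage_mul_swap_ne u (ne_of_lt hab) hak hbk⟩
      -- Cond k v w
      have hcv : Cond k v w := by
        refine ⟨?_, ?_, ?_⟩
        · intro x hx
          rcases eq_or_ne x a with rfl | hxa
          · rw [hva]; exact hubwa
          · have hxb : x ≠ b := fun h => by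
              rw [h] at hx; exact absurd hx (not_lt_of_ge hbk)
            rw [hvx x hxa hxb]; exact hc.1 x hx
        · intro y hy
          rcases eq_or_ne y b with rfl | hyb
          · rw [hvb]; exact hwbua
          · have hya : y ≠ a := fun h => by
              rw [h] at hy; exact absurd hak (not_lt_of_ge hy)
            rw [hvx y hya hyb]; exact hc.2.1 y hy
        · intro x y hxy h1 h2
          rcases eq_or_ne x a with heqa | hxa
          · subst heqa
            rcases eq_or_ne y b with heqb | hyb
            · subst heqb; exact ⟨hak, hbk⟩
            · have hya : y ≠ x := ne_of_gt hxy
              rw [hva, hvx y hya hyb] at h1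
              exact hc.2.2 x y hxy (lt_trans huab h1) h2
          · rcases eq_or_ne x b with heqb | hxb
            · subst heqb
              exfalso
              have hya : y ≠ a := ne_of_gt (lt_trans hab hxy)
              have hyb : y ≠ x := ne_of_gt hxy
              rw [hvb, hvx y hya hyb] at h1
              -- h1 : u a < u y , h2 : w y < w x (x = b)
              rcases lt_or_gt_of_ne (fun h : u y = u x => hyb (u.injective h)) with h | h
              · -- u y < u b : y qualifies for minimality
                have hymem : y ∈ Finset.univ.filter (fun y : Fin n =>
                    k ≤ y.val ∧ u a < u y ∧ u y ≤ w a ∧ w y < u y) := by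
                  refine Finset.mem_filter.mpr ⟨Finset.mem_univ _,
                    le_trans hbk (le_of_lt hxy), h1, le_trans (le_of_lt h) hubwa, ?_⟩
                  exact lt_of_lt_of_le (lt_of_lt_of_le h2 hwbua) (le_of_lt h1)
                exact absurd h (not_lt_of_ge (hbmin y hymem))
              · exact absurd (hc.2.2 x y hxy h h2).1 (not_lt_of_ge hbk)
            · rcases eq_or_ne y a with heqa | hya
              · subst heqa
                exfalso
                rw [hva, hvx x hxa hxb] at h1
                -- h1 : u x < u b, h2 : w y < w x  (y = a)
                rcases lt_or_gt_of_ne (fun h : u x = u y => hxa (u.injective h)) with h | h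
                · exact absurd (hc.2.2 x y hxy h h2).2 (not_le_of_gt hak)
                · -- u a < u x, x < a so x.val < k
                  have hxk : x.val < k := by
                    have := hxy
                    rw [Fin.lt_def] at this
                    omega
                  have hle : u x ≤ w x := hc.1 x hxk
                  rcases eq_or_lt_of_le hle with heq | hlt
                  · -- u x = w x : u x < u b ≤ w a < w x = u x
                    rw [← heq] at h2
                    exact absurd (lt_trans h1 (lt_of_le_of_lt hubwa h2)) (lt_irrefl _)
                  · have := hamax x (Finset.mem_filter.mpr ⟨Finset.mem_univ _, hxk, hlt⟩)
                    exact absurd h (not_lt_of_ge this)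
              · rcases eq_or_ne y b with heqb | hyb
                · subst heqb
                  rw [hvb, hvx x hxa hxb] at h1
                  exact hc.2.2 x y hxy (lt_trans h1 huab) h2
                · rw [hvx x hxa hxb, hvx y hya hyb] at h1
                  exact hc.2.2 x y hxy h1 h2
      -- measure decreases
      have hdec : ∑ x ∈ Finset.univ.filter (fun x : Fin n => x.val < k),
          ((w x).val - (v x).val) < m := by
        rw [← hm]
        apply Finset.sum_lt_sum
        · intro x hx
          rcases eq_or_ne x a with rfl | hxa
          · rw [hva]
            have h1 : (u x).val < (u b).val := huab
            omega
          · have hxb : x ≠ b := fun h => by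
              rw [h] at hx
              exact absurd (Finset.mem_filter.mp hx).2 (not_lt_of_ge hbk)
            rw [hvx x hxa hxb]
        · refine ⟨a, Finset.mem_filter.mpr ⟨Finset.mem_univ _, hak⟩, ?_⟩
          rw [hva]
          have h1 : (u a).val < (u b).val := huab
          have h2 : (u b).val ≤ (w a).val := hubwa
          omega
      exact Relation.ReflTransGen.head hKcov
        (ih _ hdec v w hcv rfl)

end Aux

/-- Bergeron–Sottile criterion for comparison in the `k`-Bruhat order
(Theorem A of [BS98]). Positions are zero-indexed: `a ∈ {1,…,k}` becomes
`a.val < k` and `b ∈ {k+1,…,n}` becomes `k ≤ b.val`. -/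
theorem kBruhat_iff {n k : ℕ} (hk1 : 1 ≤ k) (hkn : k < n) (u w : Equiv.Perm (Fin n)) :
    KBruhatLE k u w ↔
      ((∀ a : Fin n, a.val < k → u a ≤ w a) ∧
       (∀ b : Fin n, k ≤ b.val → w b ≤ u b) ∧
       (∀ a b : Fin n, a < b → u a < u b → w b < w a → a.val < k ∧ k ≤ b.val)) := by
  constructor
  · intro h
    unfold KBruhatLE at h
    induction h with
    | refl => exact cond_refl k u
    | tail h1 h2 ih => exact cond_trans ih (cond_of_kcover h2)
  · intro h
    exact le_of_cond _ u w ⟨h.1, h.2.1, h.2.2⟩ rfl
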